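/- Let W be the lazy random walk on a finite simple connected regular graph G = (V,E), s ≥ t_mix + 1, and let A_1, A_2 ⊂ ℕ_0 be finite intervals with min(A_1) = 0 and min(A_2) − max(A_1) ≥ s. Then for every starting vertex ρ: P_ρ(R^W(A_1) ∩ R^W(A_2) ≠ ∅) ≤ 2·#A_1·#A_2 / #V. -/

import Mathlib

set_option linter.unusedSectionVars false

open Finset

variable {V : Type*} [Fintype V] [DecidableEq V] [Nonempty V]

/-- One-step transition kernel of the lazy random walk on `G`:
stay put with probability `1/2`, otherwise move to a uniformly chosen neighbour. -/
noncomputable def lazyStep (G : SimpleGraph V) [DecidableRel G.Adj] (x y : V) : ℝ :=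
  if x = y then 1 / 2 else if G.Adj x y then 1 / (2 * (G.degree x : ℝ)) else 0

/-- `n`-step transition probabilities of the lazy random walk. -/
noncomputable def lazyProb (G : SimpleGraph V) [DecidableRel G.Adj] : ℕ → V → V → ℝ
  | 0, x, y => if x = y then 1 else 0
  | n + 1, x, y => ∑ z : V, lazyStep G x z * lazyProb G n z y

/-- The stationary (degree-biased) distribution `π(x) = deg(x)/(2#E)`. -/
noncomputable def statDist (G : SimpleGraph V) [DecidableRel G.Adj] (x : V) : ℝ :=
  (G.degree x : ℝ) / (2 * (G.edgeFinset.card : ℝ))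

/-- The uniform `(ℓ∞, 1/4)` mixing time. -/
noncomputable def tmix (G : SimpleGraph V) [DecidableRel G.Adj] : ℕ :=
  sInf {n : ℕ | ∀ x y : V, |lazyProb G n x y / statDist G y - 1| ≤ 1 / 4}

/-- Extension of a finite path to all of `ℕ` (constant after time `N`). -/
def extPath (N : ℕ) (γ : Fin (N + 1) → V) : ℕ → V :=
  fun n => γ ⟨min n N, Nat.lt_succ_of_le (min_le_right n N)⟩

/-- Weight of a finite path under the lazy random walk kernel. -/
noncomputable def pathWeight (G : SimpleGraph V) [DecidableRel G.Adj]
    (N : ℕ) (γ : Fin (N + 1) → V) : ℝ :=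
  ∏ i ∈ Finset.range N, lazyStep G (extPath N γ i) (extPath N γ (i + 1))

open Classical in
/-- Probability, for the lazy random walk started at `ρ`, of a path event
depending only on the first `N+1` coordinates. -/
noncomputable def walkProb (G : SimpleGraph V) [DecidableRel G.Adj]
    (ρ : V) (N : ℕ) (E : (ℕ → V) → Prop) : ℝ :=
  ∑ γ : Fin (N + 1) → V,
    if extPath N γ 0 = ρ ∧ E (extPath N γ) then pathWeight G N γ else 0

open Classical in
/-- Expectation, for the lazy random walk started at `ρ`, of a path functional
depending only on the first `N+1` coordinates. -/
noncomputable def walkExp (G : SimpleGraph V) [DecidableRel G.Adj]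
    (ρ : V) (N : ℕ) (f : (ℕ → V) → ℝ) : ℝ :=
  ∑ γ : Fin (N + 1) → V,
    if extPath N γ 0 = ρ then pathWeight G N γ * f (extPath N γ) else 0

open Classical in
/-- Probability of a path event for the lazy random walk started from `π`. -/
noncomputable def walkProbStat (G : SimpleGraph V) [DecidableRel G.Adj]
    (N : ℕ) (E : (ℕ → V) → Prop) : ℝ :=
  ∑ γ : Fin (N + 1) → V,
    if E (extPath N γ) then statDist G (extPath N γ 0) * pathWeight G N γ else 0

/-- Expectation of a path functional for the lazy random walk started from `π`. -/
noncomputable def walkExpStat (G : SimpleGraph V) [DecidableRel G.Adj]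
    (N : ℕ) (f : (ℕ → V) → ℝ) : ℝ :=
  ∑ γ : Fin (N + 1) → V,
    statDist G (extPath N γ 0) * pathWeight G N γ * f (extPath N γ)

open Classical in
/-- Probability of a joint event for two independent lazy random walks,
each started from the stationary distribution. -/
noncomputable def twoWalkProbStat (G : SimpleGraph V) [DecidableRel G.Adj]
    (N : ℕ) (E : (ℕ → V) → (ℕ → V) → Prop) : ℝ :=
  ∑ γ₁ : Fin (N + 1) → V, ∑ γ₂ : Fin (N + 1) → V,
    if E (extPath N γ₁) (extPath N γ₂) then
      (statDist G (extPath N γ₁ 0) * pathWeight G N γ₁) *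
      (statDist G (extPath N γ₂ 0) * pathWeight G N γ₂) else 0

open Classical in
/-- Probability of a joint event for two independent lazy random walks,
both started at the vertex `ρ`. -/
noncomputable def twoWalkProbFrom (G : SimpleGraph V) [DecidableRel G.Adj]
    (ρ : V) (N : ℕ) (E : (ℕ → V) → (ℕ → V) → Prop) : ℝ :=
  ∑ γ₁ : Fin (N + 1) → V, ∑ γ₂ : Fin (N + 1) → V,
    if extPath N γ₁ 0 = ρ ∧ extPath N γ₂ 0 = ρ ∧ E (extPath N γ₁) (extPath N γ₂) then
      pathWeight G N γ₁ * pathWeight G N γ₂ else 0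

/-- Range of a path over a finite set of times. -/
def walkRange (w : ℕ → V) (A : Finset ℕ) : Finset V := A.image w

/-- `q̄^G(s)`: averaged intersection probability of two independent lazy walks
started at the same (uniform) vertex. -/
noncomputable def qbar (G : SimpleGraph V) [DecidableRel G.Adj] (s : ℕ) : ℝ :=
  (1 / (Fintype.card V : ℝ)) * ∑ ρ : V,
    twoWalkProbFrom G ρ s (fun w₁ w₂ =>
      (walkRange w₁ (Finset.Icc 0 s) ∩ walkRange w₂ (Finset.Icc 1 s)).Nonempty)

/-- `H^W_ρ(m) = Σ_{i=0}^m Σ_{j=0}^m P_ρ(W(i+j)=ρ)`. -/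
noncomputable def HW (G : SimpleGraph V) [DecidableRel G.Adj] (ρ : V) (m : ℕ) : ℝ :=
  ∑ i ∈ Finset.range (m + 1), ∑ j ∈ Finset.range (m + 1), lazyProb G (i + j) ρ ρ


section Aux
variable (G : SimpleGraph V) [DecidableRel G.Adj]

lemma lazyStep_nonneg (x y : V) : 0 ≤ lazyStep G x y := by
  unfold lazyStep
  split_ifs <;> positivity

lemma lazyProb_nonneg (n : ℕ) (x y : V) : 0 ≤ lazyProb G n x y := by
  induction n generalizing x y with
  | zero => unfold lazyProb; split_ifs <;> norm_num
  | succ n ih =>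
    unfold lazyProb
    exact Finset.sum_nonneg fun z _ => mul_nonneg (lazyStep_nonneg G x z) (ih z y)

lemma lazyStep_eq (x y : V) :
    lazyStep G x y = (if x = y then (1:ℝ) else 0) / 2 +
      (if G.Adj x y then (1:ℝ) else 0) / (2 * (G.degree x : ℝ)) := by
  unfold lazyStep
  by_cases h : x = y
  · simp [h, G.irrefl]
  · simp only [h, if_false]
    split_ifs <;> [skip; simp] <;> ring

lemma lazyStep_rowsum (x : V) (hx : 0 < G.degree x) :
    ∑ y : V, lazyStep G x y = 1 := by
  have h1 : ∑ y : V, (if x = y then (1:ℝ) else 0) = 1 := by simp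
  have h2 : ∑ y : V, (if G.Adj x y then (1:ℝ) else 0) = (G.degree x : ℝ) := by
    rw [Finset.sum_ite, Finset.sum_const, Finset.sum_const]
    simp only [nsmul_eq_mul, mul_one, mul_zero, add_zero]
    norm_cast
    rw [← SimpleGraph.card_neighborFinset_eq_degree]
    congr 1
    ext y
    simp [SimpleGraph.mem_neighborFinset]
  have hd : (G.degree x : ℝ) ≠ 0 := by positivity
  calc ∑ y : V, lazyStep G x y
      = ∑ y : V, ((if x = y then (1:ℝ) else 0) / 2 +
          (if G.Adj x y then (1:ℝ) else 0) / (2 * (G.degree x : ℝ))) := by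
        simp_rw [lazyStep_eq]
    _ = 1 := by
        rw [Finset.sum_add_distrib, ← Finset.sum_div, ← Finset.sum_div, h1, h2]
        field_simp
        ring

end Aux


lemma lazyProb_rowsum (G : SimpleGraph V) [DecidableRel G.Adj]
    (hdeg : ∀ v : V, 0 < G.degree v) (n : ℕ) (x : V) :
    ∑ y : V, lazyProb G n x y = 1 := by
  induction n generalizing x with
  | zero => simp [lazyProb]
  | succ n ih =>
    unfold lazyProb
    rw [Finset.sum_comm]
    calc ∑ z : V, ∑ y : V, lazyStep G x z * lazyProb G n z y
        = ∑ z : V, lazyStep G x z * ∑ y : V, lazyProb G n z y := by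
          simp_rw [Finset.mul_sum]
      _ = 1 := by simp_rw [ih]; simp [lazyStep_rowsum G x (hdeg x)]

lemma lazyProb_one (G : SimpleGraph V) [DecidableRel G.Adj] (x y : V) :
    lazyProb G 1 x y = lazyStep G x y := by
  show ∑ z : V, lazyStep G x z * lazyProb G 0 z y = _
  unfold lazyProb
  simp

lemma lazyProb_add (G : SimpleGraph V) [DecidableRel G.Adj] (m n : ℕ) (x y : V) :
    lazyProb G (m + n) x y = ∑ z : V, lazyProb G m x z * lazyProb G n z y := by
  induction m generalizing x with
  | zero => simp [lazyProb]
  | succ m ih =>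
    have : m + 1 + n = (m + n) + 1 := by omega
    rw [this]
    show ∑ z : V, lazyStep G x z * lazyProb G (m + n) z y = _
    simp_rw [ih, Finset.mul_sum]
    rw [Finset.sum_comm]
    congr 1; ext z
    simp_rw [← mul_assoc]
    rw [← Finset.sum_mul]
    congr 1

lemma lazyProb_succ_right (G : SimpleGraph V) [DecidableRel G.Adj] (n : ℕ) (x y : V) :
    lazyProb G (n + 1) x y = ∑ z : V, lazyProb G n x z * lazyStep G z y := by
  rw [lazyProb_add]
  simp_rw [lazyProb_one]

lemma lazyStep_symm (G : SimpleGraph V) [DecidableRel G.Adj] {d : ℕ}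
    (hreg : G.IsRegularOfDegree d) (x y : V) : lazyStep G x y = lazyStep G y x := by
  unfold lazyStep
  by_cases h : x = y
  · simp [h]
  · have h' : ¬ y = x := fun hh => h hh.symm
    simp only [h, h', if_false]
    by_cases ha : G.Adj x y
    · simp [ha, ha.symm, hreg x, hreg y]
    · have ha' : ¬ G.Adj y x := fun hh => ha hh.symm
      simp [ha, ha']

lemma lazyProb_symm (G : SimpleGraph V) [DecidableRel G.Adj] {d : ℕ}
    (hreg : G.IsRegularOfDegree d) (n : ℕ) (x y : V) :
    lazyProb G n x y = lazyProb G n y x := by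
  induction n generalizing x y with
  | zero => unfold lazyProb; simp [eq_comm]
  | succ n ih =>
    rw [lazyProb_succ_right]
    show _ = ∑ z : V, lazyStep G y z * lazyProb G n z x
    congr 1; ext z
    rw [ih x z, lazyStep_symm G hreg z y]
    ring

lemma lazyProb_colsum (G : SimpleGraph V) [DecidableRel G.Adj] {d : ℕ}
    (hreg : G.IsRegularOfDegree d) (hdeg : ∀ v : V, 0 < G.degree v) (n : ℕ) (y : V) :
    ∑ x : V, lazyProb G n x y = 1 := by
  simp_rw [fun x => lazyProb_symm G hreg n x y]
  exact lazyProb_rowsum G hdeg n y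


section Mixing
variable (G : SimpleGraph V) [DecidableRel G.Adj]

lemma degree_pos (hconn : G.Connected) (hcard : 2 ≤ Fintype.card V) (v : V) :
    0 < G.degree v := by
  rw [SimpleGraph.degree_pos_iff_exists_adj]
  obtain ⟨u, hu⟩ := Fintype.exists_ne_of_one_lt_card (by omega) v
  obtain ⟨w⟩ := hconn.preconnected v u
  exact ⟨w.getVert 1, w.adj_snd (SimpleGraph.Walk.not_nil_of_ne (Ne.symm hu))⟩

lemma lazyProb_pos_succ {n : ℕ} {x y : V} (h : 0 < lazyProb G n x y) :
    0 < lazyProb G (n + 1) x y := by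
  show 0 < ∑ z : V, lazyStep G x z * lazyProb G n z y
  apply Finset.sum_pos' (fun z _ => mul_nonneg (lazyStep_nonneg G x z) (lazyProb_nonneg G n z y))
  refine ⟨x, Finset.mem_univ x, ?_⟩
  apply mul_pos _ h
  unfold lazyStep; simp

lemma lazyProb_pos_adj {n : ℕ} {x z y : V} (ha : G.Adj x z) (hd : 0 < G.degree x)
    (h : 0 < lazyProb G n z y) : 0 < lazyProb G (n + 1) x y := by
  show 0 < ∑ w : V, lazyStep G x w * lazyProb G n w y
  apply Finset.sum_pos' (fun w _ => mul_nonneg (lazyStep_nonneg G x w) (lazyProb_nonneg G n w y))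
  refine ⟨z, Finset.mem_univ z, ?_⟩
  apply mul_pos _ h
  unfold lazyStep
  have hxz : x ≠ z := ha.ne
  simp only [hxz, if_false, ha, if_true]
  have : (0:ℝ) < G.degree x := by exact_mod_cast hd
  positivity

lemma lazyProb_pos_walk (hdeg : ∀ v : V, 0 < G.degree v) {x y : V} (w : G.Walk x y) :
    0 < lazyProb G w.length x y := by
  induction w with
  | nil => rw [SimpleGraph.Walk.length_nil]; unfold lazyProb; simp
  | cons ha p ih => exact lazyProb_pos_adj G ha (hdeg _) ih

lemma lazyProb_pos_mono (hdeg : ∀ v : V, 0 < G.degree v) {n m : ℕ} (hnm : n ≤ m) {x y : V}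
    (h : 0 < lazyProb G n x y) : 0 < lazyProb G m x y := by
  induction m, hnm using Nat.le_induction with
  | base => exact h
  | succ m _ ih => exact lazyProb_pos_succ G ih

lemma exists_pos_time (hconn : G.Connected) (hdeg : ∀ v : V, 0 < G.degree v) :
    ∃ m : ℕ, ∀ x y : V, 0 < lazyProb G m x y := by
  have hxy : ∀ x y : V, ∃ n : ℕ, 0 < lazyProb G n x y := by
    intro x y
    obtain ⟨w⟩ := hconn.preconnected x y
    exact ⟨w.length, lazyProb_pos_walk G hdeg w⟩
  choose f hf using hxy
  refine ⟨Finset.univ.sup (fun p : V × V => f p.1 p.2), fun x y => ?_⟩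
  exact lazyProb_pos_mono G hdeg
    (Finset.le_sup (f := fun p : V × V => f p.1 p.2) (Finset.mem_univ (x, y))) (hf x y)

lemma statDist_eq {d : ℕ} (hreg : G.IsRegularOfDegree d) (hd : 0 < d) (y : V) :
    statDist G y = 1 / (Fintype.card V : ℝ) := by
  unfold statDist
  have h2 : (2 * G.edgeFinset.card : ℝ) = (d : ℝ) * (Fintype.card V : ℝ) := by
    have h0 := SimpleGraph.sum_degrees_eq_twice_card_edges G
    have this : Fintype.card V * d = 2 * G.edgeFinset.card := by
      rw [← h0, Finset.sum_congr rfl (fun v _ => hreg v), Finset.sum_const,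
        Finset.card_univ, smul_eq_mul]
    exact_mod_cast (by push_cast [← this]; ring : ((2 * G.edgeFinset.card : ℕ) : ℝ) = (d : ℝ) * (Fintype.card V : ℝ))
  rw [hreg y, h2]
  have hd' : (d : ℝ) ≠ 0 := by positivity
  have hc : (Fintype.card V : ℝ) ≠ 0 := by
    have := Fintype.card_pos (α := V); positivity
  field_simp

lemma contraction {d : ℕ} (hreg : G.IsRegularOfDegree d) (hdeg : ∀ v : V, 0 < G.degree v)
    (m : ℕ) (δ : ℝ) (hδ : 0 ≤ δ) (hm : ∀ x y : V, δ ≤ lazyProb G m x y) (k : ℕ) :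
    ∀ x y : V, |lazyProb G (k * m) x y - 1 / (Fintype.card V : ℝ)| ≤
      (1 - δ * (Fintype.card V : ℝ)) ^ k := by
  have hc : (0:ℝ) < (Fintype.card V : ℝ) := by exact_mod_cast Fintype.card_pos
  have hθ : 0 ≤ 1 - δ * (Fintype.card V : ℝ) := by
    obtain ⟨x⟩ := ‹Nonempty V›
    have h1 : δ * (Fintype.card V : ℝ) ≤ ∑ y : V, lazyProb G m x y := by
      rw [mul_comm]
      calc (Fintype.card V : ℝ) * δ = ∑ _y : V, δ := by
            rw [Finset.sum_const, Finset.card_univ, nsmul_eq_mul]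
        _ ≤ _ := Finset.sum_le_sum (fun y _ => hm x y)
    rw [lazyProb_rowsum G hdeg m x] at h1
    linarith
  induction k with
  | zero =>
    intro x y
    simp only [zero_mul, pow_zero]
    unfold lazyProb
    rw [abs_sub_le_iff]
    constructor
    · split_ifs <;> [skip; skip] <;> nlinarith [one_div_pos.mpr hc, (div_le_one hc).mpr (by exact_mod_cast Fintype.card_pos : (1:ℝ) ≤ (Fintype.card V : ℝ))]
    · split_ifs <;> nlinarith [one_div_pos.mpr hc, (div_le_one hc).mpr (by exact_mod_cast Fintype.card_pos : (1:ℝ) ≤ (Fintype.card V : ℝ))]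
  | succ k ih =>
    intro x y
    have hck : (k + 1) * m = m + k * m := by ring
    rw [hck, lazyProb_add]
    have hsum1 : ∑ z : V, lazyProb G m x z = 1 := lazyProb_rowsum G hdeg m x
    have hcol : ∑ z : V, lazyProb G (k * m) z y = 1 := lazyProb_colsum G hreg hdeg (k * m) y
    have key : ∑ z : V, lazyProb G m x z * lazyProb G (k * m) z y - 1 / (Fintype.card V : ℝ)
        = ∑ z : V, (lazyProb G m x z - δ) * (lazyProb G (k * m) z y - 1 / (Fintype.card V : ℝ)) := by
      have expand : ∀ z : V, (lazyProb G m x z - δ) *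
          (lazyProb G (k * m) z y - 1 / (Fintype.card V : ℝ))
          = lazyProb G m x z * lazyProb G (k * m) z y
            - (1 / (Fintype.card V : ℝ)) * lazyProb G m x z
            - δ * lazyProb G (k * m) z y
            + δ * (1 / (Fintype.card V : ℝ)) := fun z => by ring
      simp_rw [expand]
      rw [Finset.sum_add_distrib, Finset.sum_sub_distrib, Finset.sum_sub_distrib,
        ← Finset.mul_sum, ← Finset.mul_sum, Finset.sum_const, Finset.card_univ, nsmul_eq_mul,
        hsum1, hcol]
      have hc' : (Fintype.card V : ℝ) ≠ 0 := ne_of_gt hc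
      field_simp
      ring
    rw [key]
    calc |∑ z : V, (lazyProb G m x z - δ) * (lazyProb G (k * m) z y - 1 / (Fintype.card V : ℝ))|
        ≤ ∑ z : V, |(lazyProb G m x z - δ) * (lazyProb G (k * m) z y - 1 / (Fintype.card V : ℝ))| :=
          Finset.abs_sum_le_sum_abs _ _
      _ ≤ ∑ z : V, (lazyProb G m x z - δ) * (1 - δ * (Fintype.card V : ℝ)) ^ k := by
          apply Finset.sum_le_sum
          intro z _
          rw [abs_mul, abs_of_nonneg (by linarith [hm x z])]
          exact mul_le_mul_of_nonneg_left (ih z y) (by linarith [hm x z])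
      _ = (1 - δ * (Fintype.card V : ℝ)) * (1 - δ * (Fintype.card V : ℝ)) ^ k := by
          rw [← Finset.sum_mul, Finset.sum_sub_distrib, hsum1, Finset.sum_const,
            Finset.card_univ, nsmul_eq_mul]
          ring
      _ = (1 - δ * (Fintype.card V : ℝ)) ^ (k + 1) := by rw [pow_succ]; ring

end Mixing


lemma mixing_bound (G : SimpleGraph V) [DecidableRel G.Adj]
    (hconn : G.Connected) (hcard : 2 ≤ Fintype.card V) {d : ℕ}
    (hreg : G.IsRegularOfDegree d) {n : ℕ} (hn : tmix G ≤ n) (x y : V) :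
    |lazyProb G n x y * (Fintype.card V : ℝ) - 1| ≤ 1 / 4 := by
  have hdeg : ∀ v : V, 0 < G.degree v := degree_pos G hconn hcard
  have hd : 0 < d := by have := hdeg (Classical.arbitrary V); rwa [hreg] at this
  have hπ : ∀ z : V, statDist G z = 1 / (Fintype.card V : ℝ) := statDist_eq G hreg hd
  have hc : (0:ℝ) < (Fintype.card V : ℝ) := by exact_mod_cast Fintype.card_pos
  have hc' : (Fintype.card V : ℝ) ≠ 0 := ne_of_gt hc
  have hrat : ∀ (m : ℕ) (x y : V), lazyProb G m x y / statDist G y - 1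
      = lazyProb G m x y * (Fintype.card V : ℝ) - 1 := by
    intro m x y
    rw [hπ]
    field_simp
  -- the defining set of `tmix` is upward closed
  have hup : ∀ m : ℕ, (∀ x y : V, |lazyProb G m x y / statDist G y - 1| ≤ 1 / 4) →
      ∀ x y : V, |lazyProb G (m + 1) x y / statDist G y - 1| ≤ 1 / 4 := by
    intro m hm x y
    have key : lazyProb G (m + 1) x y / statDist G y - 1
        = ∑ z : V, lazyStep G x z * (lazyProb G m z y / statDist G y - 1) := by
      show (∑ z : V, lazyStep G x z * lazyProb G m z y) / statDist G y - 1 = _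
      have e : ∀ z : V, lazyStep G x z * (lazyProb G m z y / statDist G y - 1)
          = lazyStep G x z * lazyProb G m z y / statDist G y - lazyStep G x z := fun z => by
        ring
      rw [Finset.sum_congr rfl (fun z _ => e z), Finset.sum_sub_distrib, ← Finset.sum_div,
        lazyStep_rowsum G x (hdeg x)]
    rw [key]
    calc |∑ z : V, lazyStep G x z * (lazyProb G m z y / statDist G y - 1)|
        ≤ ∑ z : V, |lazyStep G x z * (lazyProb G m z y / statDist G y - 1)| :=
          Finset.abs_sum_le_sum_abs _ _
      _ ≤ ∑ z : V, lazyStep G x z * (1 / 4) := by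
          apply Finset.sum_le_sum
          intro z _
          rw [abs_mul, abs_of_nonneg (lazyStep_nonneg G x z)]
          exact mul_le_mul_of_nonneg_left (hm z y) (lazyStep_nonneg G x z)
      _ = 1 / 4 := by rw [← Finset.sum_mul, lazyStep_rowsum G x (hdeg x), one_mul]
  -- the defining set of `tmix` is nonempty
  have hmem : ∃ n0 : ℕ, ∀ x y : V, |lazyProb G n0 x y / statDist G y - 1| ≤ 1 / 4 := by
    obtain ⟨m, hm⟩ := exists_pos_time G hconn hdeg
    have hne : (Finset.univ : Finset (V × V)).Nonempty := Finset.univ_nonempty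
    set δ := Finset.inf' Finset.univ hne (fun p : V × V => lazyProb G m p.1 p.2) with hδ
    have hδpos : 0 < δ := by
      rw [hδ, Finset.lt_inf'_iff]
      exact fun p _ => hm p.1 p.2
    have hδle : ∀ x y : V, δ ≤ lazyProb G m x y := fun x y =>
      Finset.inf'_le _ (Finset.mem_univ (x, y))
    have hθlt : 1 - δ * (Fintype.card V : ℝ) < 1 := by nlinarith
    have hθge : 0 ≤ 1 - δ * (Fintype.card V : ℝ) := by
      have x := Classical.arbitrary V
      have h1 : δ * (Fintype.card V : ℝ) ≤ ∑ y : V, lazyProb G m x y := by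
        rw [mul_comm]
        calc (Fintype.card V : ℝ) * δ = ∑ _y : V, δ := by
              rw [Finset.sum_const, Finset.card_univ, nsmul_eq_mul]
          _ ≤ _ := Finset.sum_le_sum (fun y _ => hδle x y)
      rw [lazyProb_rowsum G hdeg m x] at h1
      linarith
    obtain ⟨k, hk⟩ := exists_pow_lt_of_lt_one
      (show (0:ℝ) < 1 / (4 * (Fintype.card V : ℝ)) by positivity) hθlt
    refine ⟨k * m, fun x y => ?_⟩
    rw [hrat]
    have hco := contraction G hreg hdeg m δ hδpos.le hδle k x y
    have : |lazyProb G (k * m) x y * (Fintype.card V : ℝ) - 1|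
        = |lazyProb G (k * m) x y - 1 / (Fintype.card V : ℝ)| * (Fintype.card V : ℝ) := by
      rw [← abs_of_pos hc, ← abs_mul, abs_of_pos hc]
      congr 1
      field_simp
    rw [this]
    calc |lazyProb G (k * m) x y - 1 / (Fintype.card V : ℝ)| * (Fintype.card V : ℝ)
        ≤ (1 - δ * (Fintype.card V : ℝ)) ^ k * (Fintype.card V : ℝ) :=
          mul_le_mul_of_nonneg_right hco hc.le
      _ ≤ 1 / 4 := by
          have e4 : (1 / (4 * (Fintype.card V : ℝ))) * (Fintype.card V : ℝ) = 1 / 4 := by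
            field_simp
          nlinarith [mul_lt_mul_of_pos_right hk hc]
  -- conclude
  have hbase : ∀ x y : V, |lazyProb G (tmix G) x y / statDist G y - 1| ≤ 1 / 4 := by
    have := Nat.sInf_mem (s := {n : ℕ | ∀ x y : V, |lazyProb G n x y / statDist G y - 1| ≤ 1 / 4})
      (by obtain ⟨n0, h0⟩ := hmem; exact ⟨n0, h0⟩)
    exact this
  have hall : ∀ x y : V, |lazyProb G n x y / statDist G y - 1| ≤ 1 / 4 := by
    induction n, hn using Nat.le_induction with
    | base => exact hbase
    | succ m _ ih => exact hup m ih
  have := hall x y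
  rwa [hrat] at this

lemma lazyProb_le_of_tmix_le (G : SimpleGraph V) [DecidableRel G.Adj]
    (hconn : G.Connected) (hcard : 2 ≤ Fintype.card V) {d : ℕ}
    (hreg : G.IsRegularOfDegree d) {n : ℕ} (hn : tmix G ≤ n) (x y : V) :
    lazyProb G n x y ≤ (5 / 4) / (Fintype.card V : ℝ) := by
  have hc : (0:ℝ) < (Fintype.card V : ℝ) := by exact_mod_cast Fintype.card_pos
  have h := mixing_bound G hconn hcard hreg hn x y
  rw [abs_le] at h
  rw [le_div_iff₀ hc]
  linarith [h.2]


section Paths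

lemma extPath_coe (N : ℕ) (γ : Fin (N + 1) → V) (k : ℕ) (hk : k ≤ N) :
    extPath N γ k = γ ⟨k, Nat.lt_succ_of_le hk⟩ := by
  unfold extPath
  congr 1
  exact Fin.ext (by simp [Nat.min_eq_left hk])

lemma sum_fun_fin_one (F : (Fin 1 → V) → ℝ) :
    ∑ γ : Fin 1 → V, F γ = ∑ v : V, F (fun _ => v) := by
  apply Fintype.sum_equiv (Equiv.funUnique (Fin 1) V)
  intro γ
  congr 1
  funext i
  have : i = 0 := Subsingleton.elim i 0
  subst this
  rfl

lemma sum_snoc (N : ℕ) (f : (Fin (N + 2) → V) → ℝ) :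
    ∑ γ : Fin (N + 2) → V, f γ = ∑ γ : Fin (N + 1) → V, ∑ x : V, f (Fin.snoc γ x) := by
  rw [← Equiv.sum_comp (Fin.snocEquiv (fun _ => V)) f, Fintype.sum_prod_type]
  rw [Finset.sum_comm]
  rfl

lemma extPath_snoc_of_le (N k : ℕ) (hk : k ≤ N) (γ : Fin (N + 1) → V) (x : V) :
    extPath (N + 1) (Fin.snoc γ x) k = extPath N γ k := by
  rw [extPath_coe _ _ k (by omega), extPath_coe _ _ k hk]
  have h1 : (⟨k, by omega⟩ : Fin (N + 2)) = Fin.castSucc ⟨k, Nat.lt_succ_of_le hk⟩ := rfl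
  rw [h1, Fin.snoc_castSucc]

lemma extPath_snoc_last (N : ℕ) (γ : Fin (N + 1) → V) (x : V) :
    extPath (N + 1) (Fin.snoc γ x) (N + 1) = x := by
  rw [extPath_coe _ _ _ le_rfl]
  have h1 : (⟨N + 1, by omega⟩ : Fin (N + 2)) = Fin.last (N + 1) := rfl
  rw [h1, Fin.snoc_last]

lemma pathWeight_snoc (G : SimpleGraph V) [DecidableRel G.Adj]
    (N : ℕ) (γ : Fin (N + 1) → V) (x : V) :
    pathWeight G (N + 1) (Fin.snoc γ x)
      = pathWeight G N γ * lazyStep G (extPath N γ N) x := by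
  unfold pathWeight
  rw [Finset.prod_range_succ]
  congr 1
  · apply Finset.prod_congr rfl
    intro i hi
    have hi' : i < N := Finset.mem_range.mp hi
    rw [extPath_snoc_of_le N i (by omega), extPath_snoc_of_le N (i + 1) (by omega)]
  · rw [extPath_snoc_of_le N N le_rfl, extPath_snoc_last]

lemma pathWeight_zero (G : SimpleGraph V) [DecidableRel G.Adj] (γ : Fin 1 → V) :
    pathWeight G 0 γ = 1 := by
  unfold pathWeight
  simp

end Paths


open Classical in
lemma core_sum (G : SimpleGraph V) [DecidableRel G.Adj] (ρ : V) :
    ∀ (N : ℕ), ∀ (i j : ℕ), i ≤ j → j ≤ N → ∀ (x y : V) (h : V → ℝ),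
    (∑ γ : Fin (N + 1) → V,
      if extPath N γ 0 = ρ ∧ extPath N γ i = x ∧ extPath N γ j = y
      then pathWeight G N γ * h (extPath N γ N) else 0)
    = lazyProb G i ρ x * (lazyProb G (j - i) x y * ∑ z : V, lazyProb G (N - j) y z * h z) := by
  intro N
  induction N with
  | zero =>
    intro i j hij hj x y h
    have hi0 : i = 0 := by omega
    have hj0 : j = 0 := by omega
    subst hi0; subst hj0
    rw [sum_fun_fin_one]
    simp only [show ∀ v : V, extPath 0 (fun _ => v) 0 = v from fun _ => rfl,
      pathWeight_zero, one_mul]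
    simp only [Nat.sub_self]
    unfold lazyProb
    by_cases hx : ρ = x
    · by_cases hxy : x = y
      · subst hx; subst hxy
        simp only [and_self, if_pos rfl, one_mul]
        rw [Finset.sum_ite_eq' Finset.univ ρ h]
        rw [Finset.sum_congr rfl (fun z _ => by
          rw [show (if ρ = z then (1:ℝ) else 0) * h z
            = if ρ = z then h z else 0 by split_ifs <;> simp])]
        rw [Finset.sum_ite_eq Finset.univ ρ h]
        simp
      · rw [if_neg hxy, Finset.sum_eq_zero]
        · ring
        · intro v _
          rw [if_neg]
          rintro ⟨h1, h2, h3⟩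
          exact hxy (h2.symm.trans h3)
    · rw [if_neg hx, Finset.sum_eq_zero]
      · ring
      · intro v _
        rw [if_neg]
        rintro ⟨h1, h2, h3⟩
        exact hx (h1.symm.trans h2)
  | succ N ih =>
    intro i j hij hj x y h
    rw [sum_snoc]
    by_cases hjN : j ≤ N
    · have hiN : i ≤ N := le_trans hij hjN
      have key : ∀ (γ : Fin (N + 1) → V) (w : V),
          (if extPath (N + 1) (Fin.snoc γ w) 0 = ρ ∧ extPath (N + 1) (Fin.snoc γ w) i = x ∧
              extPath (N + 1) (Fin.snoc γ w) j = y
           then pathWeight G (N + 1) (Fin.snoc γ w) * h (extPath (N + 1) (Fin.snoc γ w) (N + 1))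
           else 0)
          = (if extPath N γ 0 = ρ ∧ extPath N γ i = x ∧ extPath N γ j = y
             then pathWeight G N γ * (lazyStep G (extPath N γ N) w * h w) else 0) := by
        intro γ w
        rw [extPath_snoc_of_le N 0 (by omega), extPath_snoc_of_le N i hiN,
          extPath_snoc_of_le N j hjN, extPath_snoc_last, pathWeight_snoc]
        split_ifs with hc
        · ring
        · rfl
      simp only [key]
      have inner : ∀ γ : Fin (N + 1) → V,
          (∑ w : V, if extPath N γ 0 = ρ ∧ extPath N γ i = x ∧ extPath N γ j = y
            then pathWeight G N γ * (lazyStep G (extPath N γ N) w * h w) else 0)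
          = (if extPath N γ 0 = ρ ∧ extPath N γ i = x ∧ extPath N γ j = y
            then pathWeight G N γ *
              ((fun z => ∑ w : V, lazyStep G z w * h w) (extPath N γ N)) else 0) := by
        intro γ
        split_ifs with hc
        · rw [Finset.mul_sum]
        · exact Finset.sum_const_zero
      rw [Finset.sum_congr rfl (fun γ _ => inner γ)]
      rw [ih i j hij hjN x y (fun z => ∑ w : V, lazyStep G z w * h w)]
      congr 1
      congr 1
      have swap : ∑ z : V, lazyProb G (N - j) y z * ∑ w : V, lazyStep G z w * h w
          = ∑ w : V, (∑ z : V, lazyProb G (N - j) y z * lazyStep G z w) * h w := by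
        simp_rw [Finset.mul_sum, Finset.sum_mul]
        rw [Finset.sum_comm]
        congr 1; ext z; congr 1; ext w; ring
      rw [swap]
      have hNj : N + 1 - j = (N - j) + 1 := by omega
      rw [hNj]
      apply Finset.sum_congr rfl
      intro w _
      rw [lazyProb_succ_right]
    · -- j = N + 1
      have hjeq : j = N + 1 := by omega
      subst hjeq
      by_cases hiN : i ≤ N
      · have key : ∀ (γ : Fin (N + 1) → V) (w : V),
            (if extPath (N + 1) (Fin.snoc γ w) 0 = ρ ∧ extPath (N + 1) (Fin.snoc γ w) i = x ∧
                extPath (N + 1) (Fin.snoc γ w) (N + 1) = y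
             then pathWeight G (N + 1) (Fin.snoc γ w) * h (extPath (N + 1) (Fin.snoc γ w) (N + 1))
             else 0)
            = (if w = y then
                (if extPath N γ 0 = ρ ∧ extPath N γ i = x ∧ extPath N γ i = x
                 then pathWeight G N γ * (lazyStep G (extPath N γ N) y * h y) else 0) else 0) := by
          intro γ w
          rw [extPath_snoc_of_le N 0 (by omega), extPath_snoc_of_le N i hiN,
            extPath_snoc_last, pathWeight_snoc]
          by_cases hw : w = y
          · subst hw
            rw [if_pos rfl]
            split_ifs with h1 h2 h3
            · ring
            · exact (h2 ⟨h1.1, h1.2.1, h1.2.1⟩).elim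
            · exact (h1 ⟨h3.1, h3.2.1, rfl⟩).elim
            · rfl
          · rw [if_neg hw, if_neg (by tauto)]
        simp only [key]
        have inner : ∀ γ : Fin (N + 1) → V,
            (∑ w : V, if w = y then
              (if extPath N γ 0 = ρ ∧ extPath N γ i = x ∧ extPath N γ i = x
               then pathWeight G N γ * (lazyStep G (extPath N γ N) y * h y) else 0) else 0)
            = (if extPath N γ 0 = ρ ∧ extPath N γ i = x ∧ extPath N γ i = x
               then pathWeight G N γ *
                 ((fun z => lazyStep G z y * h y) (extPath N γ N)) else 0) := by
          intro γ
          rw [Finset.sum_ite_eq' Finset.univ y]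
          simp
        rw [Finset.sum_congr rfl (fun γ _ => inner γ)]
        rw [ih i i le_rfl hiN x x (fun z => lazyStep G z y * h y)]
        have hp0 : lazyProb G (i - i) x x = 1 := by
          rw [Nat.sub_self]; unfold lazyProb; simp
        rw [hp0, one_mul]
        congr 1
        have e2 : ∑ z : V, lazyProb G (N - i) x z * (lazyStep G z y * h y)
            = (∑ z : V, lazyProb G (N - i) x z * lazyStep G z y) * h y := by
          rw [Finset.sum_mul]
          congr 1; ext z; ring
        rw [e2, ← lazyProb_succ_right]
        have hNi : N + 1 - i = (N - i) + 1 := by omega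
        rw [hNi]
        have e3 : ∑ z : V, lazyProb G (N + 1 - (N + 1)) y z * h z = h y := by
          rw [Nat.sub_self]
          unfold lazyProb
          rw [Finset.sum_congr rfl (fun z _ => by
            rw [show (if y = z then (1:ℝ) else 0) * h z
              = if y = z then h z else 0 by split_ifs <;> simp])]
          rw [Finset.sum_ite_eq Finset.univ y h]
          simp
        rw [e3]
      · -- i = j = N + 1
        have hieq : i = N + 1 := by omega
        subst hieq
        have key : ∀ (γ : Fin (N + 1) → V) (w : V),
            (if extPath (N + 1) (Fin.snoc γ w) 0 = ρ ∧
                extPath (N + 1) (Fin.snoc γ w) (N + 1) = x ∧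
                extPath (N + 1) (Fin.snoc γ w) (N + 1) = y
             then pathWeight G (N + 1) (Fin.snoc γ w) * h (extPath (N + 1) (Fin.snoc γ w) (N + 1))
             else 0)
            = (if w = x then
                (if x = y then
                  (if extPath N γ 0 = ρ ∧ extPath N γ 0 = ρ ∧ extPath N γ 0 = ρ
                   then pathWeight G N γ * (lazyStep G (extPath N γ N) x * h x) else 0)
                 else 0) else 0) := by
          intro γ w
          rw [extPath_snoc_of_le N 0 (by omega), extPath_snoc_last, pathWeight_snoc]
          by_cases hw : w = x
          · subst hw
            by_cases hxy : w = y
            · subst hxy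
              rw [if_pos rfl, if_pos rfl]
              split_ifs with h1 h2 h3
              · ring
              · exact (h2 ⟨h1.1, h1.1, h1.1⟩).elim
              · exact (h1 ⟨h3.1, rfl, rfl⟩).elim
              · rfl
            · rw [if_pos rfl, if_neg hxy, if_neg (by tauto)]
          · rw [if_neg hw, if_neg (by tauto)]
        simp only [key]
        have inner : ∀ γ : Fin (N + 1) → V,
            (∑ w : V, if w = x then
              (if x = y then
                (if extPath N γ 0 = ρ ∧ extPath N γ 0 = ρ ∧ extPath N γ 0 = ρ
                 then pathWeight G N γ * (lazyStep G (extPath N γ N) x * h x) else 0)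
               else 0) else 0)
            = (if x = y then
                (if extPath N γ 0 = ρ ∧ extPath N γ 0 = ρ ∧ extPath N γ 0 = ρ
                 then pathWeight G N γ *
                   ((fun z => lazyStep G z x * h x) (extPath N γ N)) else 0) else 0) := by
          intro γ
          rw [Finset.sum_ite_eq' Finset.univ x]
          simp
        rw [Finset.sum_congr rfl (fun γ _ => inner γ)]
        by_cases hxy : x = y
        · subst hxy
          simp only [eq_self_iff_true, if_true]
          rw [show (∑ γ : Fin (N+1) → V,
              if extPath N γ 0 = ρ ∧ extPath N γ 0 = ρ ∧ extPath N γ 0 = ρ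
              then pathWeight G N γ * ((fun z => lazyStep G z x * h x) (extPath N γ N)) else 0)
            = lazyProb G 0 ρ ρ * (lazyProb G (0 - 0) ρ ρ *
                ∑ z : V, lazyProb G (N - 0) ρ z * ((fun z => lazyStep G z x * h x) z))
            from ih 0 0 le_rfl (by omega) ρ ρ (fun z => lazyStep G z x * h x)]
          have hp0 : lazyProb G 0 ρ ρ = 1 := by unfold lazyProb; simp
          rw [hp0]
          have e2 : ∑ z : V, lazyProb G (N - 0) ρ z * (lazyStep G z x * h x)
              = (∑ z : V, lazyProb G N ρ z * lazyStep G z x) * h x := by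
            rw [Finset.sum_mul]
            simp only [Nat.sub_zero]
            congr 1; ext z; ring
          rw [e2, ← lazyProb_succ_right]
          have e3 : ∑ z : V, lazyProb G 0 x z * h z = h x := by
            unfold lazyProb
            rw [Finset.sum_congr rfl (fun z _ => by
              rw [show (if x = z then (1:ℝ) else 0) * h z
                = if x = z then h z else 0 by split_ifs <;> simp])]
            rw [Finset.sum_ite_eq Finset.univ x h]
            simp
          rw [Nat.sub_self]
          rw [show lazyProb G 0 x x = 1 from by unfold lazyProb; simp, e3]
          ring
        · simp only [if_neg hxy]
          have hp0 : lazyProb G (N + 1 - (N + 1)) x y = 0 := by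
            rw [Nat.sub_self]; unfold lazyProb; simp [hxy]
          rw [hp0]
          simp


lemma pathWeight_nonneg (G : SimpleGraph V) [DecidableRel G.Adj] (N : ℕ)
    (γ : Fin (N + 1) → V) : 0 ≤ pathWeight G N γ :=
  Finset.prod_nonneg fun i _ => lazyStep_nonneg G _ _

open Classical in
lemma two_point (G : SimpleGraph V) [DecidableRel G.Adj]
    (hdeg : ∀ v : V, 0 < G.degree v) (ρ : V) (N i j : ℕ) (hij : i ≤ j) (hj : j ≤ N) (x : V) :
    (∑ γ : Fin (N + 1) → V,
      if extPath N γ 0 = ρ ∧ extPath N γ i = x ∧ extPath N γ j = x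
      then pathWeight G N γ else 0)
    = lazyProb G i ρ x * lazyProb G (j - i) x x := by
  have hc := core_sum G ρ N i j hij hj x x (fun _ => 1)
  simp only [mul_one] at hc
  rw [lazyProb_rowsum G hdeg (N - j) x, mul_one] at hc
  exact hc

/-- Range self-intersection probability when the first interval starts at 0. -/
theorem range_self_intersection_starting_at_zero
    (G : SimpleGraph V) [DecidableRel G.Adj] (hconn : G.Connected)
    (hcard : 2 ≤ Fintype.card V) (d : ℕ) (hreg : G.IsRegularOfDegree d)
    (s : ℕ) (hs : tmix G + 1 ≤ s)
    (b₁ a₂ b₂ : ℕ) (h₂ : a₂ ≤ b₂) (hsep : b₁ + s ≤ a₂) (ρ : V) :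
    walkProb G ρ b₂ (fun w =>
        (walkRange w (Finset.Icc 0 b₁) ∩ walkRange w (Finset.Icc a₂ b₂)).Nonempty) ≤
      2 * ((Finset.Icc 0 b₁).card : ℝ) * ((Finset.Icc a₂ b₂).card : ℝ) /
        (Fintype.card V : ℝ) := by
  classical
  have hdeg : ∀ v : V, 0 < G.degree v := degree_pos G hconn hcard
  have hc : (0:ℝ) < (Fintype.card V : ℝ) := by
    have := Fintype.card_pos (α := V); positivity
  set A₁ := Finset.Icc 0 b₁ with hA₁
  set A₂ := Finset.Icc a₂ b₂ with hA₂
  have step1 : walkProb G ρ b₂ (fun w =>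
        (walkRange w A₁ ∩ walkRange w A₂).Nonempty)
      ≤ ∑ γ : Fin (b₂ + 1) → V, ∑ p ∈ A₁ ×ˢ A₂,
          (if extPath b₂ γ 0 = ρ ∧ extPath b₂ γ p.1 = extPath b₂ γ p.2
           then pathWeight G b₂ γ else 0) := by
    unfold walkProb
    apply Finset.sum_le_sum
    intro γ _
    by_cases hcond : extPath b₂ γ 0 = ρ ∧
        (walkRange (extPath b₂ γ) A₁ ∩ walkRange (extPath b₂ γ) A₂).Nonempty
    · rw [if_pos hcond]
      obtain ⟨hρ, v, hv⟩ := hcond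
      rw [Finset.mem_inter] at hv
      obtain ⟨hv1, hv2⟩ := hv
      rw [walkRange, Finset.mem_image] at hv1 hv2
      obtain ⟨i, hi, hwi⟩ := hv1
      obtain ⟨j, hj, hwj⟩ := hv2
      have hterm : (if extPath b₂ γ 0 = ρ ∧ extPath b₂ γ (i, j).1 = extPath b₂ γ (i, j).2
          then pathWeight G b₂ γ else 0) = pathWeight G b₂ γ :=
        if_pos ⟨hρ, by rw [hwi, hwj]⟩
      calc pathWeight G b₂ γ = _ := hterm.symm
        _ ≤ _ := Finset.single_le_sum (f := fun p : ℕ × ℕ =>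
            if extPath b₂ γ 0 = ρ ∧ extPath b₂ γ p.1 = extPath b₂ γ p.2
            then pathWeight G b₂ γ else 0)
            (fun p _ => by split_ifs; exacts [pathWeight_nonneg G b₂ γ, le_rfl])
            (Finset.mem_product.mpr ⟨hi, hj⟩)
    · rw [if_neg hcond]
      apply Finset.sum_nonneg
      intro p _
      split_ifs
      · exact pathWeight_nonneg G b₂ γ
      · exact le_rfl
  have step2 : ∀ p : ℕ × ℕ, p ∈ A₁ ×ˢ A₂ →
      (∑ γ : Fin (b₂ + 1) → V,
        if extPath b₂ γ 0 = ρ ∧ extPath b₂ γ p.1 = extPath b₂ γ p.2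
        then pathWeight G b₂ γ else 0) ≤ (5 / 4) / (Fintype.card V : ℝ) := by
    rintro ⟨i, j⟩ hp
    rw [Finset.mem_product] at hp
    obtain ⟨hi, hj⟩ := hp
    rw [hA₁, Finset.mem_Icc] at hi
    rw [hA₂, Finset.mem_Icc] at hj
    have hij : i ≤ j := by omega
    have hjb : j ≤ b₂ := hj.2
    have hsplit : ∀ γ : Fin (b₂ + 1) → V,
        (if extPath b₂ γ 0 = ρ ∧ extPath b₂ γ i = extPath b₂ γ j
         then pathWeight G b₂ γ else 0)
        = ∑ x : V, (if extPath b₂ γ 0 = ρ ∧ extPath b₂ γ i = x ∧ extPath b₂ γ j = x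
            then pathWeight G b₂ γ else 0) := by
      intro γ
      by_cases h1 : extPath b₂ γ 0 = ρ
      · by_cases h2 : extPath b₂ γ i = extPath b₂ γ j
        · rw [if_pos ⟨h1, h2⟩, Finset.sum_eq_single (extPath b₂ γ i)]
          · rw [if_pos ⟨h1, rfl, h2.symm⟩]
          · intro x _ hx
            rw [if_neg (fun hcc => hx hcc.2.1.symm)]
          · intro hx
            exact (hx (Finset.mem_univ _)).elim
        · rw [if_neg (by tauto), Finset.sum_eq_zero]
          intro x _
          rw [if_neg]
          rintro ⟨ha, hb, hc'⟩
          exact h2 (hb.trans hc'.symm)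
      · rw [if_neg (by tauto), Finset.sum_eq_zero]
        intro x _
        rw [if_neg (by tauto)]
    rw [Finset.sum_congr rfl (fun γ _ => hsplit γ), Finset.sum_comm]
    have htime : tmix G ≤ j - i := by omega
    calc ∑ x : V, ∑ γ : Fin (b₂ + 1) → V,
          (if extPath b₂ γ 0 = ρ ∧ extPath b₂ γ i = x ∧ extPath b₂ γ j = x
           then pathWeight G b₂ γ else 0)
        = ∑ x : V, lazyProb G i ρ x * lazyProb G (j - i) x x := by
          apply Finset.sum_congr rfl
          intro x _
          exact two_point G hdeg ρ b₂ i j hij hjb x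
      _ ≤ ∑ x : V, lazyProb G i ρ x * ((5 / 4) / (Fintype.card V : ℝ)) := by
          apply Finset.sum_le_sum
          intro x _
          exact mul_le_mul_of_nonneg_left
            (lazyProb_le_of_tmix_le G hconn hcard hreg htime x x)
            (lazyProb_nonneg G i ρ x)
      _ = (5 / 4) / (Fintype.card V : ℝ) := by
          rw [← Finset.sum_mul, lazyProb_rowsum G hdeg i ρ, one_mul]
  calc walkProb G ρ b₂ (fun w => (walkRange w A₁ ∩ walkRange w A₂).Nonempty)
      ≤ ∑ γ : Fin (b₂ + 1) → V, ∑ p ∈ A₁ ×ˢ A₂,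
          (if extPath b₂ γ 0 = ρ ∧ extPath b₂ γ p.1 = extPath b₂ γ p.2
           then pathWeight G b₂ γ else 0) := step1
    _ = ∑ p ∈ A₁ ×ˢ A₂, ∑ γ : Fin (b₂ + 1) → V,
          (if extPath b₂ γ 0 = ρ ∧ extPath b₂ γ p.1 = extPath b₂ γ p.2
           then pathWeight G b₂ γ else 0) := Finset.sum_comm
    _ ≤ ∑ _p ∈ A₁ ×ˢ A₂, (5 / 4) / (Fintype.card V : ℝ) := Finset.sum_le_sum step2
    _ = ((A₁.card : ℝ) * (A₂.card : ℝ)) * ((5 / 4) / (Fintype.card V : ℝ)) := by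
        rw [Finset.sum_const, Finset.card_product, nsmul_eq_mul]
        push_cast
        ring
    _ ≤ 2 * (A₁.card : ℝ) * (A₂.card : ℝ) / (Fintype.card V : ℝ) := by
        calc ((A₁.card : ℝ) * (A₂.card : ℝ)) * ((5 / 4) / (Fintype.card V : ℝ))
            ≤ ((A₁.card : ℝ) * (A₂.card : ℝ)) * (2 / (Fintype.card V : ℝ)) := by
              apply mul_le_mul_of_nonneg_left _ (by positivity)
              exact (div_le_div_iff_of_pos_right hc).mpr (by norm_num)
          _ = 2 * (A₁.card : ℝ) * (A₂.card : ℝ) / (Fintype.card V : ℝ) := by ring
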